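/- Let v_1, ..., v_6 be unit vectors in ℝ³ that are equiangular with common angle 1/√5 and whose rank-one projections v_i v_iᵀ span the symmetric subspace S_3 of M_3(ℂ). Then there exists z ∈ ℂ with |z| = 1 such that the six matrices U_i := I_3 − (1−z)·v_i v_iᵀ are unitary, pairwise trace-orthogonal, and moreover there is no unitary matrix V ∈ M_3(ℂ) with tr(U_i* V) = 0 for all i = 1, ..., 6. (Under the Choi–Jamiolkowski isomorphism, the U_i are the image of a UMEB of cardinality 6 in ℂ³ ⊗ ℂ³.) -/

import Mathlib

open Matrix

/-- The symmetric subspace `S_d` of `M_d(ℂ)`: matrices `A` with `Aᵀ = A`. -/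
noncomputable def symMatrices (d : ℕ) : Submodule ℂ (Matrix (Fin d) (Fin d) ℂ) where
  carrier := {A : Matrix (Fin d) (Fin d) ℂ | Aᵀ = A}
  add_mem' := by
    intro a b ha hb
    simp only [Set.mem_setOf_eq, Matrix.transpose_add] at *
    rw [ha, hb]
  zero_mem' := by simp
  smul_mem' := by
    intro c A hA
    simp only [Set.mem_setOf_eq, Matrix.transpose_smul] at *
    rw [hA]

/-- The complex rank-one projection `v vᵀ` associated to a real vector `v`. -/
noncomputable def realProj {d : ℕ} (v : Fin d → ℝ) : Matrix (Fin d) (Fin d) ℂ :=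
  (Matrix.vecMulVec v v).map Complex.ofReal

namespace BSaux

noncomputable def zz : ℂ := ⟨-7/8, Real.sqrt 15 / 8⟩

lemma h15 : Real.sqrt 15 * Real.sqrt 15 = 15 := Real.mul_self_sqrt (by norm_num)

lemma normSq_zz : Complex.normSq zz = 1 := by
  rw [zz, Complex.normSq_mk]; nlinarith [h15]

lemma hm_zz : zz * starRingEnd ℂ zz = 1 := by
  rw [Complex.mul_conj, normSq_zz]; norm_num

lemma hs_zz : zz + starRingEnd ℂ zz = -7/4 := by
  rw [Complex.add_conj]; norm_num [zz]

lemma habs_zz : ‖zz‖ = 1 := by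
  rw [Complex.norm_def, normSq_zz, Real.sqrt_one]

section proj
variable {d : ℕ} (u w : Fin d → ℝ)

lemma realProj_conjTranspose : (realProj u)ᴴ = realProj u := by
  ext i j
  simp [realProj, Matrix.conjTranspose_apply, Matrix.vecMulVec_apply, mul_comm]

lemma realProj_transpose : (realProj u)ᵀ = realProj u := by
  ext i j
  simp [realProj, Matrix.transpose_apply, Matrix.vecMulVec_apply, mul_comm]

lemma realProj_mul : realProj u * realProj w
    = ((u ⬝ᵥ w : ℝ) : ℂ) • ((Matrix.vecMulVec u w).map Complex.ofReal) := by
  ext i j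
  simp only [realProj, Matrix.map_apply, Matrix.vecMulVec_apply, Matrix.mul_apply,
    Matrix.smul_apply, dotProduct, smul_eq_mul]
  push_cast
  rw [Finset.sum_mul]
  exact Finset.sum_congr rfl fun k _ => by ring

lemma trace_map_vecMulVec : Matrix.trace ((Matrix.vecMulVec u w).map Complex.ofReal)
    = ((u ⬝ᵥ w : ℝ) : ℂ) := by
  simp [Matrix.trace, Matrix.diag, Matrix.vecMulVec_apply, dotProduct]

lemma trace_realProj : Matrix.trace (realProj u) = ((u ⬝ᵥ u : ℝ) : ℂ) :=
  trace_map_vecMulVec u u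

lemma trace_realProj_mul : Matrix.trace (realProj u * realProj w)
    = ((u ⬝ᵥ w : ℝ) : ℂ) ^ 2 := by
  rw [realProj_mul, Matrix.trace_smul, trace_map_vecMulVec, smul_eq_mul, sq]

end proj

lemma trace_mul_trans (P V : Matrix (Fin 3) (Fin 3) ℂ) (h : Pᵀ = P) :
    Matrix.trace (P * Vᵀ) = Matrix.trace (P * V) := by
  conv_lhs => rw [← Matrix.trace_transpose, Matrix.transpose_mul, Matrix.transpose_transpose]
  rw [Matrix.trace_mul_comm, h]

lemma expand_mul (a b : ℂ) (P : Matrix (Fin 3) (Fin 3) ℂ) (h : P * P = P) :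
    (1 - a • P) * (1 - b • P) = 1 - (a + b - a * b) • P := by
  simp only [mul_sub, sub_mul, one_mul, mul_one, smul_mul_assoc, mul_smul_comm, h, smul_smul]
  module

end BSaux

open BSaux in
/-- Bravyi–Smolin UMEB in dimension 3: six maximal real equiangular lines
in ℝ³ yield, for some unimodular z, six pairwise trace-orthogonal unitaries
U_i = I₃ − (1−z) v_i v_iᵀ with no unitary trace-orthogonal to all of them. -/
theorem bravyi_smolin_UMEB
    (v : Fin 6 → (Fin 3 → ℝ))
    (hunit : ∀ i, v i ⬝ᵥ v i = 1)
    (hang : ∀ i j, i ≠ j → |v i ⬝ᵥ v j| = 1 / Real.sqrt 5)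
    (hspan : Submodule.span ℂ (Set.range fun i => realProj (v i)) = symMatrices 3) :
    ∃ z : ℂ, ‖z‖ = 1 ∧
      (∀ i, (1 - (1 - z) • realProj (v i)) ∈ Matrix.unitaryGroup (Fin 3) ℂ) ∧
      (∀ i j, i ≠ j →
        Matrix.trace ((1 - (1 - z) • realProj (v i))ᴴ * (1 - (1 - z) • realProj (v j))) = 0) ∧
      ¬ ∃ V : Matrix (Fin 3) (Fin 3) ℂ,
          V ∈ Matrix.unitaryGroup (Fin 3) ℂ ∧
          ∀ i, Matrix.trace ((1 - (1 - z) • realProj (v i))ᴴ * V) = 0 := by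
  have hm := hm_zz
  have hs := hs_zz
  have hPsq : ∀ i, realProj (v i) * realProj (v i) = realProj (v i) := by
    intro i
    have h := realProj_mul (v i) (v i)
    rw [hunit i] at h
    simpa [realProj] using h
  have hPtr : ∀ i, Matrix.trace (realProj (v i)) = 1 := by
    intro i
    rw [trace_realProj, hunit i, Complex.ofReal_one]
  have hPtr2 : ∀ i j, i ≠ j →
      Matrix.trace (realProj (v i) * realProj (v j)) = 1/5 := by
    intro i j hij
    rw [trace_realProj_mul]
    have h2 : (v i ⬝ᵥ v j) ^ 2 = 1/5 := by
      rw [← sq_abs, hang i j hij, div_pow, one_pow, Real.sq_sqrt (by norm_num : (5:ℝ) ≥ 0)]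
    rw [← Complex.ofReal_pow, h2]
    push_cast
    norm_num
  have hstar : ∀ i, (1 - (1 - zz) • realProj (v i))ᴴ
      = 1 - (1 - starRingEnd ℂ zz) • realProj (v i) := by
    intro i
    rw [Matrix.conjTranspose_sub, Matrix.conjTranspose_one, Matrix.conjTranspose_smul,
      realProj_conjTranspose]
    congr 1
    simp
  refine ⟨zz, habs_zz, ?_, ?_, ?_⟩
  · -- unitarity
    intro i
    rw [Matrix.mem_unitaryGroup_iff, Matrix.star_eq_conjTranspose, hstar i,
      expand_mul _ _ _ (hPsq i)]
    have h0 : (1 - zz) + (1 - starRingEnd ℂ zz) - (1 - zz) * (1 - starRingEnd ℂ zz) = 0 := by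
      linear_combination -hm
    rw [h0, zero_smul, sub_zero]
  · -- pairwise trace orthogonality
    intro i j hij
    rw [hstar i]
    simp only [sub_mul, mul_sub, one_mul, mul_one, smul_mul_assoc, mul_smul_comm,
      smul_smul, Matrix.trace_sub, Matrix.trace_smul, Matrix.trace_one, smul_eq_mul,
      Fintype.card_fin, hPtr i, hPtr j, hPtr2 i j hij]
    push_cast
    linear_combination (1/5 : ℂ) * hm + (4/5 : ℂ) * hs
  · -- unextendibility
    rintro ⟨V, hVU, hVtr⟩
    set b : ℂ := 1 - starRingEnd ℂ zz with hbdef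
    have hbne : b ≠ 0 := by
      rw [hbdef]
      intro h
      have := congrArg Complex.re h
      simp [zz] at this
      norm_num at this
    set c : ℂ := Matrix.trace V / b with hcdef
    have htr : ∀ i, Matrix.trace (realProj (v i) * V) = c := by
      intro i
      have h := hVtr i
      rw [hstar i, sub_mul, one_mul, smul_mul_assoc, Matrix.trace_sub,
        Matrix.trace_smul, smul_eq_mul] at h
      rw [hcdef]
      field_simp
      linear_combination -h
    -- symmetric part
    have hWmem : V + Vᵀ ∈ symMatrices 3 := by
      show (V + Vᵀ)ᵀ = V + Vᵀ
      rw [Matrix.transpose_add, Matrix.transpose_transpose, add_comm]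
    rw [← hspan] at hWmem
    rw [Submodule.mem_span_range_iff_exists_fun] at hWmem
    obtain ⟨x, hx⟩ := hWmem
    have hpair : ∀ j i, Matrix.trace (realProj (v j) * realProj (v i))
        = if i = j then 1 else 1/5 := by
      intro j i
      by_cases h : i = j
      · subst h
        rw [if_pos rfl, trace_realProj_mul, hunit i]
        norm_num
      · rw [if_neg h, hPtr2 j i (Ne.symm h)]
    have htrW : ∀ j, Matrix.trace (realProj (v j) * (V + Vᵀ)) = 2 * c := by
      intro j
      rw [mul_add, Matrix.trace_add, trace_mul_trans _ _ (realProj_transpose (v j)), htr j]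
      ring
    have hsum : ∀ j, (1/5) * (∑ i, x i) + (4/5) * x j = 2 * c := by
      intro j
      have h := htrW j
      rw [← hx, Matrix.mul_sum] at h
      simp only [mul_smul_comm, Matrix.trace_sum, Matrix.trace_smul, smul_eq_mul,
        hpair j] at h
      rw [Finset.sum_congr rfl (fun i (_ : i ∈ Finset.univ) =>
        (by split <;> ring : x i * (if i = j then (1:ℂ) else 1/5)
          = x i * (1/5) + (if i = j then x i * (4/5) else 0)))] at h
      rw [Finset.sum_add_distrib, Finset.sum_ite_eq' Finset.univ j (fun i => x i * (4/5)),
        if_pos (Finset.mem_univ j), ← Finset.sum_mul] at h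
      linear_combination h
    have hS : (∑ i, x i) = 6 * c := by
      have h := Finset.sum_congr rfl (fun j (_ : j ∈ (Finset.univ : Finset (Fin 6))) => hsum j)
      rw [Finset.sum_add_distrib, Finset.sum_const, ← Finset.mul_sum, Finset.sum_const] at h
      simp only [Finset.card_univ, Fintype.card_fin, nsmul_eq_mul] at h
      push_cast at h
      linear_combination (1/2 : ℂ) * h
    have htrV : Matrix.trace V = 3 * c := by
      have h : Matrix.trace (V + Vᵀ) = ∑ i, x i := by
        rw [← hx, Matrix.trace_sum]
        simp only [Matrix.trace_smul, smul_eq_mul, hPtr, mul_one]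
      rw [Matrix.trace_add, Matrix.trace_transpose] at h
      rw [hS] at h
      linear_combination (1/2 : ℂ) * h
    have hc0 : c = 0 := by
      have h : b * c = Matrix.trace V := by
        rw [hcdef]
        field_simp
      rw [htrV] at h
      have hb3 : b - 3 ≠ 0 := by
        rw [hbdef]
        intro hh
        have := congrArg Complex.re hh
        simp [zz] at this
        norm_num at this
      have : (b - 3) * c = 0 := by linear_combination h
      rcases mul_eq_zero.mp this with h' | h'
      · exact absurd h' hb3
      · exact h'
    have hx0 : ∀ j, x j = 0 := by
      intro j
      have h := hsum j
      rw [hS, hc0] at h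
      simp at h
      exact h
    have hW0 : V + Vᵀ = 0 := by
      rw [← hx]
      simp [hx0]
    have hVt : Vᵀ = -V := by
      have := hW0
      rw [add_comm] at this
      exact eq_neg_of_add_eq_zero_left this
    have hdet0 : V.det = 0 := by
      have h := Matrix.det_transpose V
      rw [hVt, Matrix.det_neg] at h
      simp only [Fintype.card_fin] at h
      norm_num at h
      linear_combination (-1/2 : ℂ) * h
    have hdet1 : V.det ≠ 0 := by
      have h := congrArg Matrix.det (Matrix.mem_unitaryGroup_iff.mp hVU)
      rw [Matrix.det_mul, Matrix.det_one] at h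
      intro h0
      rw [h0, zero_mul] at h
      exact zero_ne_one h
    exact hdet1 hdet0
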